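/- Let G be an α-star-constellation graph (α ∈ ℕ₀) and let v be a swap-equilibrium for a Schelling game on G. Then for every set S of at most α edges of G, v remains a swap-equilibrium on G − S (v is α-edge-robust). -/

import Mathlib

open SimpleGraph

variable {V : Type*}

/-- Utility of the agent occupying vertex `v` in graph `H` under type assignment `τ`:
the fraction of same-type agents among occupied neighbors (0 if no neighbors). -/
noncomputable def utility (H : SimpleGraph V) (τ : V → Bool) (v : V) : ℚ := by
  classical
  exact if H.neighborSet v = ∅ then 0
    else ((H.neighborSet v ∩ {w | τ w = τ v}).ncard : ℚ) / ((H.neighborSet v).ncard : ℚ)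

/-- The type function after the agents on vertices `i` and `j` exchange their vertices. -/
noncomputable def swapAt (τ : V → Bool) (i j : V) : V → Bool := fun v => by
  classical
  exact if v = i then τ j else if v = j then τ i else τ v

/-- The swap of the (distinct-type) agents on `i` and `j` strictly increases both utilities. -/
def ProfitableSwap (H : SimpleGraph V) (τ : V → Bool) (i j : V) : Prop :=
  τ i ≠ τ j ∧
  utility H τ i < utility H (swapAt τ i j) j ∧
  utility H τ j < utility H (swapAt τ i j) i

/-- Swap-equilibrium: no profitable swap exists. -/
def IsSwapEq (H : SimpleGraph V) (τ : V → Bool) : Prop :=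
  ∀ i j : V, ¬ ProfitableSwap H τ i j

/-- Degree of a vertex (number of neighbors). -/
noncomputable def ndeg (H : SimpleGraph V) (v : V) : ℕ := (H.neighborSet v).ncard

/-- `G` is an `α`-star-constellation graph: connected, and every vertex of degree `> 1`
has at least `α` more degree-one neighbors than neighbors of degree `> 1`. -/
def IsStarConstellation (G : SimpleGraph V) (α : ℕ) : Prop :=
  G.Connected ∧ ∀ v : V, 1 < ndeg G v →
    {w ∈ G.neighborSet v | 1 < ndeg G w}.ncard + α ≤
      {w ∈ G.neighborSet v | ndeg G w = 1}.ncard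

lemma swapAt_fst (τ : V → Bool) (i j : V) : swapAt τ i j i = τ j := by simp [swapAt]

lemma swapAt_snd (τ : V → Bool) {i j : V} (h : j ≠ i) : swapAt τ i j j = τ i := by
  simp [swapAt, h]

lemma swapAt_other (τ : V → Bool) {i j v : V} (h1 : v ≠ i) (h2 : v ≠ j) :
    swapAt τ i j v = τ v := by simp [swapAt, h1, h2]

lemma utility_of_empty {H : SimpleGraph V} {τ : V → Bool} {v : V}
    (h : H.neighborSet v = ∅) : utility H τ v = 0 := by simp [utility, h]

lemma utility_of_ne {H : SimpleGraph V} {τ : V → Bool} {v : V} (h : H.neighborSet v ≠ ∅) :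
    utility H τ v
      = ((H.neighborSet v ∩ {w | τ w = τ v}).ncard : ℚ) / ((H.neighborSet v).ncard : ℚ) := by
  simp [utility, h]

lemma utility_nonneg (H : SimpleGraph V) (τ : V → Bool) (v : V) : 0 ≤ utility H τ v := by
  by_cases h : H.neighborSet v = ∅
  · simp [utility_of_empty h]
  · rw [utility_of_ne h]; positivity

section Lems
variable [Fintype V]

lemma exists_same_of_utility_pos {H : SimpleGraph V} {τ : V → Bool} {v : V}
    (h : 0 < utility H τ v) : ∃ x ∈ H.neighborSet v, τ x = τ v := by
  by_contra hc
  push_neg at hc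
  have hemp : H.neighborSet v ∩ {w | τ w = τ v} = ∅ := by
    ext w; simp only [Set.mem_inter_iff, Set.mem_setOf_eq, Set.mem_empty_iff_false, iff_false,
      not_and]
    exact fun hw => hc w hw
  by_cases h0 : H.neighborSet v = ∅
  · rw [utility_of_empty h0] at h; exact lt_irrefl _ h
  · rw [utility_of_ne h0, hemp] at h; simp at h

lemma utility_pos {H : SimpleGraph V} {τ : V → Bool} {v x : V}
    (hx : x ∈ H.neighborSet v) (hτ : τ x = τ v) : 0 < utility H τ v := by
  have hne : H.neighborSet v ≠ ∅ := Set.nonempty_iff_ne_empty.mp ⟨x, hx⟩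
  rw [utility_of_ne hne]
  apply div_pos
  · have : 0 < (H.neighborSet v ∩ {w | τ w = τ v}).ncard :=
      (Set.ncard_pos (Set.toFinite _)).mpr ⟨x, hx, hτ⟩
    exact_mod_cast this
  · have : 0 < (H.neighborSet v).ncard :=
      (Set.ncard_pos (Set.toFinite _)).mpr ⟨x, hx⟩
    exact_mod_cast this

lemma utility_lt_one {H : SimpleGraph V} {τ : V → Bool} {v x : V}
    (hx : x ∈ H.neighborSet v) (hτ : τ x ≠ τ v) : utility H τ v < 1 := by
  have hne : H.neighborSet v ≠ ∅ := Set.nonempty_iff_ne_empty.mp ⟨x, hx⟩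
  rw [utility_of_ne hne]
  have hn : 0 < (H.neighborSet v).ncard := (Set.ncard_pos (Set.toFinite _)).mpr ⟨x, hx⟩
  rw [div_lt_one (by exact_mod_cast hn)]
  have hss : H.neighborSet v ∩ {w | τ w = τ v} ⊂ H.neighborSet v := by
    constructor
    · exact Set.inter_subset_left
    · intro hsub
      exact hτ (hsub hx).2
  exact_mod_cast Set.ncard_lt_ncard hss (Set.toFinite _)

lemma half_le_utility {H : SimpleGraph V} {τ : V → Bool} {v : V}
    (hne : (H.neighborSet v).Nonempty)
    (h : (H.neighborSet v \ {w | τ w = τ v}).ncard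
      ≤ (H.neighborSet v ∩ {w | τ w = τ v}).ncard) :
    1/2 ≤ utility H τ v := by
  rw [utility_of_ne (Set.nonempty_iff_ne_empty.mp hne)]
  have hn : 0 < (H.neighborSet v).ncard := (Set.ncard_pos (Set.toFinite _)).mpr hne
  have hsplit := Set.ncard_inter_add_ncard_diff_eq_ncard (H.neighborSet v)
    {w | τ w = τ v} (Set.toFinite _)
  rw [div_le_div_iff₀ (by norm_num) (by exact_mod_cast hn), one_mul]
  have h2 : (H.neighborSet v).ncard ≤ (H.neighborSet v ∩ {w | τ w = τ v}).ncard * 2 := by omega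
  exact_mod_cast h2

lemma utility_swap_le (H : SimpleGraph V) (τ : V → Bool) {i j : V} (hij : τ i ≠ τ j) :
    utility H (swapAt τ i j) j ≤ 1 - utility H τ j := by
  have hne' : i ≠ j := fun h => hij (h ▸ rfl)
  by_cases h0 : H.neighborSet j = ∅
  · rw [utility_of_empty h0, utility_of_empty h0]; norm_num
  · rw [utility_of_ne h0, utility_of_ne h0]
    have hn : 0 < (H.neighborSet j).ncard :=
      (Set.ncard_pos (Set.toFinite _)).mpr (Set.nonempty_iff_ne_empty.mpr h0)
    set A := H.neighborSet j ∩ {w | swapAt τ i j w = swapAt τ i j j} with hA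
    set B := H.neighborSet j ∩ {w | τ w = τ j} with hB
    have hdisj : Disjoint A B := by
      rw [Set.disjoint_left]
      rintro w ⟨hwN, hw1⟩ ⟨-, hw2⟩
      simp only [Set.mem_setOf_eq] at hw1 hw2
      rw [swapAt_snd τ (Ne.symm hne')] at hw1
      rcases eq_or_ne w i with rfl | hwi
      · rw [swapAt_fst] at hw1; exact hij hw1.symm
      · have hwj : w ≠ j := fun h => (H.irrefl (h ▸ hwN))
        rw [swapAt_other τ hwi hwj] at hw1
        exact hij (hw1.symm.trans hw2)
    have hcard : A.ncard + B.ncard ≤ (H.neighborSet j).ncard := by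
      rw [← Set.ncard_union_eq hdisj (Set.toFinite _) (Set.toFinite _)]
      exact Set.ncard_le_ncard (Set.union_subset Set.inter_subset_left Set.inter_subset_left)
        (Set.toFinite _)
    rw [le_sub_iff_add_le, ← add_div, div_le_one (by exact_mod_cast hn)]
    exact_mod_cast hcard

end Lems

lemma bool_eq_of_ne_of_ne {a b c : Bool} (h1 : a ≠ c) (h2 : b ≠ c) : a = b := by
  cases a <;> cases b <;> cases c <;> simp_all

section Main
variable [Fintype V]

lemma ncard_inter_le_delete_add (G : SimpleGraph V) (S : Set (Sym2 V)) (T : Set V) (v : V) :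
    (G.neighborSet v ∩ T).ncard ≤ ((G.deleteEdges S).neighborSet v ∩ T).ncard + S.ncard := by
  classical
  set sG := G.neighborSet v ∩ T with hsG
  set sH := (G.deleteEdges S).neighborSet v ∩ T with hsH
  have hsub : sG ⊆ sH ∪ (sG \ sH) := by
    intro w hw
    by_cases h : w ∈ sH
    · exact Or.inl h
    · exact Or.inr ⟨hw, h⟩
  have h1 : sG.ncard ≤ sH.ncard + (sG \ sH).ncard :=
    le_trans (Set.ncard_le_ncard hsub (Set.toFinite _)) (Set.ncard_union_le _ _)
  have h2 : (sG \ sH).ncard ≤ S.ncard := by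
    apply Set.ncard_le_ncard_of_injOn (fun w => s(v, w))
    · rintro w ⟨⟨hadj, hT⟩, hns⟩
      by_contra hmem
      exact hns ⟨(G.deleteEdges_adj).mpr ⟨hadj, hmem⟩, hT⟩
    · intro w1 _ w2 _ hequ
      exact Sym2.congr_right.mp hequ
  omega

lemma lemmaA (G : SimpleGraph V) (τ : V → Bool) (heq : IsSwapEq G τ)
    {u c : V} (hu : ndeg G u = 1) (hc : c ∈ G.neighborSet u) (hcu : τ c ≠ τ u)
    {x y : V} (hx : τ x = τ c) (hxc : x ≠ c) (hy : y ∈ G.neighborSet x) (hyx : τ y ≠ τ x) :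
    False := by
  have hadjuc : G.Adj u c := hc
  have hNu : G.neighborSet u = {c} := by
    obtain ⟨a, ha⟩ := Set.ncard_eq_one.mp hu
    rw [ha] at hc ⊢
    rw [Set.mem_singleton_iff] at hc
    rw [hc]
  have hxu : x ≠ u := fun h => hcu (by rw [← hx, h])
  have hux : u ∉ G.neighborSet x := by
    intro h
    have : x ∈ G.neighborSet u := (G.adj_symm h : G.Adj u x)
    rw [hNu, Set.mem_singleton_iff] at this
    exact hxc this
  have hadjxy : G.Adj x y := hy
  have hyu : y ≠ u := fun h => hux (h ▸ hy)
  have hyne : y ≠ x := hadjxy.ne'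
  have hcne : c ≠ u := hadjuc.ne'
  have hcx : c ≠ x := hxc.symm
  have hτyu : τ y = τ u := bool_eq_of_ne_of_ne (by rw [← hx]; exact hyx) (Ne.symm hcu)
  have hτux : τ u ≠ τ x := fun h => hcu (hx ▸ h).symm
  apply heq u x
  refine ⟨hτux, ?_, ?_⟩
  · have hzero : utility G τ u = 0 := by
      have hemp : G.neighborSet u ∩ {w | τ w = τ u} = ∅ := by
        rw [hNu]
        ext w
        simp only [Set.mem_inter_iff, Set.mem_singleton_iff, Set.mem_setOf_eq,
          Set.mem_empty_iff_false, iff_false, not_and]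
        rintro rfl
        exact hcu
      rw [utility_of_ne (by rw [hNu]; exact Set.singleton_ne_empty c), hemp]
      simp
    rw [hzero]
    apply utility_pos hy
    rw [swapAt_other τ hyu hyne, swapAt_snd τ hxu]
    exact hτyu
  · have hone : utility G (swapAt τ u x) u = 1 := by
      have hset : G.neighborSet u ∩ {w | swapAt τ u x w = swapAt τ u x u} = {c} := by
        rw [hNu]
        ext w
        simp only [Set.mem_inter_iff, Set.mem_singleton_iff, Set.mem_setOf_eq]
        constructor
        · rintro ⟨rfl, -⟩; rfl
        · rintro rfl
          refine ⟨rfl, ?_⟩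
          rw [swapAt_other τ hcne hcx, swapAt_fst]
          exact hx.symm
      rw [utility_of_ne (by rw [hNu]; exact Set.singleton_ne_empty c), hset, hNu]
      simp
    rw [hone]
    exact utility_lt_one hy hyx

lemma half_le_utility_delete (G : SimpleGraph V) (α : ℕ) (τ : V → Bool) (S : Set (Sym2 V))
    (hG : IsStarConstellation G α) (hS : S.ncard ≤ α)
    (hhappy : ∀ v c : V, ndeg G v = 1 → c ∈ G.neighborSet v → τ c = τ v)
    {i x : V} (hx : x ∈ (G.deleteEdges S).neighborSet i) (hxi : τ x ≠ τ i) :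
    1/2 ≤ utility (G.deleteEdges S) τ i := by
  have hHG : ∀ w, w ∈ (G.deleteEdges S).neighborSet i → w ∈ G.neighborSet i := by
    intro w hw
    exact ((G.deleteEdges_adj).mp hw).1
  have hxG : x ∈ G.neighborSet i := hHG x hx
  have hdeg : 1 < ndeg G i := by
    have hpos : 0 < ndeg G i := (Set.ncard_pos (Set.toFinite _)).mpr ⟨x, hxG⟩
    have hne1 : ndeg G i ≠ 1 := by
      intro h1
      exact hxi (hhappy i x h1 hxG)
    omega
  have hcon := hG.2 i hdeg
  have hleaf_sub : {w ∈ G.neighborSet i | ndeg G w = 1} ⊆ G.neighborSet i ∩ {w | τ w = τ i} := by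
    rintro w ⟨hwN, hw1⟩
    exact ⟨hwN, (hhappy w i hw1 ((G.adj_symm hwN : G.Adj w i))).symm⟩
  have hdiff_sub : G.neighborSet i \ {w | τ w = τ i} ⊆ {w ∈ G.neighborSet i | 1 < ndeg G w} := by
    rintro w ⟨hwN, hwτ⟩
    simp only [Set.mem_setOf_eq] at hwτ
    refine ⟨hwN, ?_⟩
    have hpos : 0 < ndeg G w := (Set.ncard_pos (Set.toFinite _)).mpr
      ⟨i, (G.adj_symm hwN : G.Adj w i)⟩
    have hne1 : ndeg G w ≠ 1 := by
      intro h1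
      exact hwτ (hhappy w i h1 ((G.adj_symm hwN : G.Adj w i))).symm
    omega
  have h1 : (G.neighborSet i \ {w | τ w = τ i}).ncard
      ≤ {w ∈ G.neighborSet i | 1 < ndeg G w}.ncard :=
    Set.ncard_le_ncard hdiff_sub (Set.toFinite _)
  have h2 : {w ∈ G.neighborSet i | ndeg G w = 1}.ncard
      ≤ (G.neighborSet i ∩ {w | τ w = τ i}).ncard :=
    Set.ncard_le_ncard hleaf_sub (Set.toFinite _)
  have h3 := ncard_inter_le_delete_add G S {w | τ w = τ i} i
  have h4 : ((G.deleteEdges S).neighborSet i \ {w | τ w = τ i}).ncard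
      ≤ (G.neighborSet i \ {w | τ w = τ i}).ncard :=
    Set.ncard_le_ncard (fun w hw => ⟨hHG w hw.1, hw.2⟩) (Set.toFinite _)
  apply half_le_utility ⟨x, hx⟩
  omega

end Main

/-- On an `α`-star-constellation graph, every swap-equilibrium is `α`-edge-robust: it
remains a swap-equilibrium after deleting any set of at most `α` edges. -/
theorem starConstellation_alpha_edge_robust [Fintype V] (G : SimpleGraph V) (α : ℕ)
    (τ : V → Bool) (hG : IsStarConstellation G α) (heq : IsSwapEq G τ) :
    ∀ S : Set (Sym2 V), S ⊆ G.edgeSet → S.ncard ≤ α →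
      IsSwapEq (G.deleteEdges S) τ := by
  intro S hSsub hScard i j hswap
  obtain ⟨hij, h2, h3⟩ := hswap
  have hne : i ≠ j := fun h => hij (h ▸ rfl)
  set H := G.deleteEdges S with hH
  have hHG : ∀ v w : V, w ∈ H.neighborSet v → w ∈ G.neighborSet v := by
    intro v w hw
    exact ((G.deleteEdges_adj).mp hw).1
  -- F1 : i has an opposite-type neighbor x ≠ j in H
  have hp3 : 0 < utility H (swapAt τ i j) i := lt_of_le_of_lt (utility_nonneg _ _ _) h3
  obtain ⟨x, hxN, hxτ⟩ := exists_same_of_utility_pos hp3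
  rw [swapAt_fst] at hxτ
  have hxi : x ≠ i := ((H.mem_neighborSet i x).mp hxN).ne'
  have hxj : x ≠ j := by
    rintro rfl
    rw [swapAt_snd τ (Ne.symm hne)] at hxτ
    first | exact hij hxτ | exact hij hxτ.symm
  rw [swapAt_other τ hxi hxj] at hxτ
  -- F2 : j has an opposite-type neighbor y ≠ i in H
  have hp2 : 0 < utility H (swapAt τ i j) j := lt_of_le_of_lt (utility_nonneg _ _ _) h2
  obtain ⟨y, hyN, hyτ⟩ := exists_same_of_utility_pos hp2
  rw [swapAt_snd τ (Ne.symm hne)] at hyτ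
  have hyj : y ≠ j := ((H.mem_neighborSet j y).mp hyN).ne'
  have hyi : y ≠ i := by
    rintro rfl
    rw [swapAt_fst] at hyτ
    first | exact hij hyτ | exact hij hyτ.symm
  rw [swapAt_other τ hyi hyj] at hyτ
  have hxG : x ∈ G.neighborSet i := hHG i x hxN
  have hyG : y ∈ G.neighborSet j := hHG j y hyN
  by_cases hun : ∃ u c, ndeg G u = 1 ∧ c ∈ G.neighborSet u ∧ τ c ≠ τ u
  · -- unhappy leaf exists: rigid structure, contradiction via lemmaA
    obtain ⟨u, c, hu1, hcN, hcu⟩ := hun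
    have hcol : τ i = τ c ∨ τ j = τ c := by
      rcases eq_or_ne (τ i) (τ c) with h | h
      · exact Or.inl h
      · exact Or.inr (bool_eq_of_ne_of_ne (Ne.symm hij) (Ne.symm h))
    rcases hcol with hcol | hcol
    · rcases eq_or_ne i c with rfl | hic
      · exact lemmaA G τ heq hu1 hcN hcu (hyτ.trans hcol) hyi
          ((G.adj_symm hyG : G.Adj y j)) (by rw [hyτ]; exact Ne.symm hij)
      · exact lemmaA G τ heq hu1 hcN hcu hcol hic hxG (by rw [hxτ]; exact Ne.symm hij)
    · rcases eq_or_ne j c with rfl | hjc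
      · exact lemmaA G τ heq hu1 hcN hcu (hxτ.trans hcol) hxj
          ((G.adj_symm hxG : G.Adj x i)) (by rw [hxτ]; exact hij)
      · exact lemmaA G τ heq hu1 hcN hcu hcol hjc hyG (by rw [hyτ]; exact hij)
  · -- all leaves happy: both utilities ≥ 1/2, contradiction
    push_neg at hun
    have hi2 : 1/2 ≤ utility H τ i :=
      half_le_utility_delete G α τ S hG hScard hun hxN (by rw [hxτ]; exact Ne.symm hij)
    have hj2 : 1/2 ≤ utility H τ j :=
      half_le_utility_delete G α τ S hG hScard hun hyN (by rw [hyτ]; exact hij)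
    have hle := utility_swap_le H τ hij
    linarith
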